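/- Let r ≥ 2 be a real number and let Z_n, Y_n, Z, Y be real random variables on a probability space (Ω, ℱ, P) with finite absolute moments of order r−1, such that Z_n → Z and Y_n → Y in the L^{r−1} norm. If for every n and every η ∈ ℝ one has E[max(η−Z_n,0)^{r−1}] ≤ E[max(η−Y_n,0)^{r−1}], then E[max(η−Z,0)^{r−1}] ≤ E[max(η−Y,0)^{r−1}] for all η ∈ ℝ. (Closedness of the graph of the map Y ↦ {Z : Z dominates Y in the r-th order} under L^{r−1} convergence.) -/

import Mathlib

open MeasureTheory Filter Set

noncomputable section

/-- Distribution function `F_Z(η) = P(Z ≤ η)`. -/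
def cdfRV {Ω : Type*} [MeasurableSpace Ω] (P : Measure Ω) (Z : Ω → ℝ) (η : ℝ) : ℝ :=
  (P {ω | Z ω ≤ η}).toReal

/-- Quantile function `F⁻¹_Z(p) = inf {η | F_Z(η) ≥ p}`. -/
def qf {Ω : Type*} [MeasurableSpace Ω] (P : Measure Ω) (Z : Ω → ℝ) (p : ℝ) : ℝ :=
  sInf {η : ℝ | p ≤ cdfRV P Z η}

/-- Absolute Lorenz function `F^{(-2)}_Z(p) = ∫₀^p F⁻¹_Z(t) dt`. -/
def lorenz {Ω : Type*} [MeasurableSpace Ω] (P : Measure Ω) (Z : Ω → ℝ) (p : ℝ) : ℝ :=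
  ∫ t in (0:ℝ)..p, qf P Z t

/-- Shortfall function `F^{(2)}_Z(η) = E[max(η - Z, 0)]`. -/
def shortfall {Ω : Type*} [MeasurableSpace Ω] (P : Measure Ω) (Z : Ω → ℝ) (η : ℝ) : ℝ :=
  ∫ ω, max (η - Z ω) 0 ∂P

/-- Second-order stochastic dominance. -/
def SSD {Ω : Type*} [MeasurableSpace Ω] (P : Measure Ω) (Z Y : Ω → ℝ) : Prop :=
  ∀ η : ℝ, shortfall P Z η ≤ shortfall P Y η

/-- First-order Wasserstein distance. -/
def W1 {Ω : Type*} [MeasurableSpace Ω] (P : Measure Ω) (X Z : Ω → ℝ) : ℝ :=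
  ∫ p in (0:ℝ)..1, |qf P X p - qf P Z p|

/-- Distance from `X` to the set `A₂(Y)` of integrable random variables dominating `Y`
in the second order, in terms of `W₁`. -/
def distA2 {Ω : Type*} [MeasurableSpace Ω] (P : Measure Ω) (X Y : Ω → ℝ) : ℝ :=
  sInf {d : ℝ | ∃ Z : Ω → ℝ, Integrable Z P ∧ SSD P Z Y ∧ d = W1 P X Z}

/-- An atomless probability space. -/
def Atomless {Ω : Type*} [MeasurableSpace Ω] (P : Measure Ω) : Prop :=
  ∀ s : Set Ω, MeasurableSet s → P s ≠ 0 →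
    ∃ t : Set Ω, t ⊆ s ∧ MeasurableSet t ∧ 0 < P t ∧ P t < P s

/-- `r`-th order shortfall transform `F^{(r)}_Z(η) = (1/Γ(r)) E[max(η-Z,0)^{r-1}]`,
with the convention `max(η-z,0)^0 = 𝟙_{z ≤ η}`. -/
def sfr {Ω : Type*} [MeasurableSpace Ω] (P : Measure Ω) (Z : Ω → ℝ) (r η : ℝ) : ℝ :=
  (1 / Real.Gamma r) * ∫ ω, (if Z ω ≤ η then (η - Z ω) ^ (r - 1) else 0) ∂P

/-- `r`-th order stochastic dominance: `Z ≽_{(r)} Y`. -/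
def domR {Ω : Type*} [MeasurableSpace Ω] (P : Measure Ω) (Z Y : Ω → ℝ) (r : ℝ) : Prop :=
  ∀ η : ℝ, sfr P Z r η ≤ sfr P Y r η



theorem aux_tendsto {Ω : Type*} [MeasurableSpace Ω] (P : Measure Ω) [IsProbabilityMeasure P]
    (r : ℝ) (hr : 2 ≤ r) (Xn : ℕ → Ω → ℝ) (X : Ω → ℝ)
    (hXn : ∀ n, MemLp (Xn n) (ENNReal.ofReal (r - 1)) P)
    (hX : MemLp X (ENNReal.ofReal (r - 1)) P)
    (hconv : Tendsto (fun n => eLpNorm (fun ω => Xn n ω - X ω) (ENNReal.ofReal (r - 1)) P)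
      atTop (nhds 0)) (η : ℝ) :
    Tendsto (fun n => ∫ ω, (if Xn n ω ≤ η then (η - Xn n ω) ^ (r - 1) else 0) ∂P)
      atTop (nhds (∫ ω, (if X ω ≤ η then (η - X ω) ^ (r - 1) else 0) ∂P)) := by
  have hp1 : (1:ℝ) ≤ r - 1 := by linarith
  have hp0 : (0:ℝ) < r - 1 := by linarith
  set p : ENNReal := ENNReal.ofReal (r - 1) with hp
  have hpt : p.toReal = r - 1 := ENNReal.toReal_ofReal (by linarith)
  have hpne0 : p ≠ 0 := by
    simp only [hp, Ne, ENNReal.ofReal_eq_zero, not_le]; linarith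
  have hpnet : p ≠ ⊤ := ENNReal.ofReal_ne_top
  have hp1' : (1:ENNReal) ≤ p := by
    rw [hp, ← ENNReal.ofReal_one]; exact ENNReal.ofReal_le_ofReal hp1
  set f : ℕ → Ω → ℝ := fun n ω => max (η - Xn n ω) 0 with hf
  set g : Ω → ℝ := fun ω => max (η - X ω) 0 with hg
  have key : ∀ (W : Ω → ℝ) (ω : Ω), (if W ω ≤ η then (η - W ω) ^ (r - 1) else 0)
      = ‖max (η - W ω) 0‖ ^ (r - 1) := by
    intro W ω
    by_cases h : W ω ≤ η
    · rw [if_pos h, max_eq_left (by linarith), Real.norm_of_nonneg (by linarith)]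
    · rw [if_neg h, max_eq_right (by push_neg at h; linarith), norm_zero,
        Real.zero_rpow (by linarith)]
  have hfm : ∀ n, MemLp (f n) p P := fun n => ((memLp_const η).sub (hXn n)).pos_part
  have hgm : MemLp g p P := ((memLp_const η).sub hX).pos_part
  have hdiff : ∀ n, eLpNorm (fun ω => f n ω - g ω) p P
      ≤ eLpNorm (fun ω => Xn n ω - X ω) p P := by
    intro n
    apply eLpNorm_mono
    intro ω
    simp only [hf, hg, Real.norm_eq_abs]
    have := MeasureTheory.Lp.lipschitzWith_pos_part.dist_le_mul (η - Xn n ω) (η - X ω)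
    simp only [Real.dist_eq, NNReal.coe_one, one_mul] at this
    calc |max (η - Xn n ω) 0 - max (η - X ω) 0| ≤ |(η - Xn n ω) - (η - X ω)| := this
      _ = |Xn n ω - X ω| := by
          rw [show η - Xn n ω - (η - X ω) = -(Xn n ω - X ω) by ring, abs_neg]
  have hdfin : ∀ n, eLpNorm (fun ω => Xn n ω - X ω) p P ≠ ⊤ := fun n =>
    ((hXn n).sub hX).2.ne
  have htendsR : Tendsto (fun n => (eLpNorm (f n) p P).toReal) atTop
      (nhds ((eLpNorm g p P).toReal)) := by
    set d : ℕ → ℝ := fun n => (eLpNorm (fun ω => Xn n ω - X ω) p P).toReal with hd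
    have hdconv : Tendsto d atTop (nhds 0) := by
      have := (ENNReal.tendsto_toReal (by simp)).comp hconv
      exact this
    have h1 : ∀ n, (eLpNorm (f n) p P).toReal ≤ (eLpNorm g p P).toReal + d n := by
      intro n
      calc (eLpNorm (f n) p P).toReal
          ≤ (eLpNorm (fun ω => g ω + (f n ω - g ω)) p P).toReal := by
            have he : (fun ω => g ω + (f n ω - g ω)) = f n := by funext ω; ring
            rw [he]
        _ ≤ (eLpNorm g p P + eLpNorm (fun ω => f n ω - g ω) p P).toReal := by
            apply ENNReal.toReal_mono
            · exact ENNReal.add_ne_top.2 ⟨hgm.2.ne, ((hfm n).sub hgm).2.ne⟩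
            · exact eLpNorm_add_le hgm.aestronglyMeasurable
                ((hfm n).sub hgm).aestronglyMeasurable hp1'
        _ = (eLpNorm g p P).toReal + (eLpNorm (fun ω => f n ω - g ω) p P).toReal :=
            ENNReal.toReal_add hgm.2.ne ((hfm n).sub hgm).2.ne
        _ ≤ _ := by
            gcongr
            exact ENNReal.toReal_mono (hdfin n) (hdiff n)
    have h2 : ∀ n, (eLpNorm g p P).toReal - d n ≤ (eLpNorm (f n) p P).toReal := by
      intro n
      rw [sub_le_iff_le_add]
      have hsw : eLpNorm (fun ω => g ω - f n ω) p P
          = eLpNorm (fun ω => f n ω - g ω) p P := by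
        rw [← eLpNorm_neg (f := fun ω => f n ω - g ω)]
        congr 1; funext ω; simp only [Pi.neg_apply]; ring
      calc (eLpNorm g p P).toReal
          ≤ (eLpNorm (fun ω => f n ω + (g ω - f n ω)) p P).toReal := by
            have he : (fun ω => f n ω + (g ω - f n ω)) = g := by funext ω; ring
            rw [he]
        _ ≤ (eLpNorm (f n) p P + eLpNorm (fun ω => g ω - f n ω) p P).toReal := by
            apply ENNReal.toReal_mono
            · exact ENNReal.add_ne_top.2 ⟨(hfm n).2.ne, (hgm.sub (hfm n)).2.ne⟩
            · exact eLpNorm_add_le (hfm n).aestronglyMeasurable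
                (hgm.sub (hfm n)).aestronglyMeasurable hp1'
        _ = (eLpNorm (f n) p P).toReal + (eLpNorm (fun ω => g ω - f n ω) p P).toReal :=
            ENNReal.toReal_add (hfm n).2.ne (hgm.sub (hfm n)).2.ne
        _ ≤ _ := by
            gcongr
            rw [hsw]
            exact ENNReal.toReal_mono (hdfin n) (hdiff n)
    have hub : Tendsto (fun n => (eLpNorm g p P).toReal + d n) atTop
        (nhds ((eLpNorm g p P).toReal)) := by
      have := (tendsto_const_nhds (x := (eLpNorm g p P).toReal) (f := atTop)).add hdconv
      simpa using this
    have hlb : Tendsto (fun n => (eLpNorm g p P).toReal - d n) atTop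
        (nhds ((eLpNorm g p P).toReal)) := by
      have := (tendsto_const_nhds (x := (eLpNorm g p P).toReal) (f := atTop)).sub hdconv
      simpa using this
    exact tendsto_of_tendsto_of_tendsto_of_le_of_le hlb hub h2 h1
  have hint : ∀ (W : Ω → ℝ), MemLp W p P →
      ∫ ω, ‖W ω‖ ^ (r - 1) ∂P = (eLpNorm W p P).toReal ^ (r - 1) := by
    intro W hW
    have hnn : (0:ℝ) ≤ ∫ ω, ‖W ω‖ ^ (r - 1) ∂P :=
      integral_nonneg fun ω => by positivity
    rw [hW.eLpNorm_eq_integral_rpow_norm hpne0 hpnet, hpt,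
      ENNReal.toReal_ofReal (by positivity),
      ← Real.rpow_mul hnn, inv_mul_cancel₀ hp0.ne', Real.rpow_one]
  have e1 : ∀ n, ∫ ω, (if Xn n ω ≤ η then (η - Xn n ω) ^ (r - 1) else 0) ∂P
      = (eLpNorm (f n) p P).toReal ^ (r - 1) := by
    intro n
    rw [← hint (f n) (hfm n)]
    exact integral_congr_ae (Filter.Eventually.of_forall fun ω => key (Xn n) ω)
  have e2 : ∫ ω, (if X ω ≤ η then (η - X ω) ^ (r - 1) else 0) ∂P
      = (eLpNorm g p P).toReal ^ (r - 1) := by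
    rw [← hint g hgm]
    exact integral_congr_ae (Filter.Eventually.of_forall fun ω => key X ω)
  simp only [e1, e2]
  exact htendsR.rpow_const (Or.inr hp0.le)

/-- closedness of the `r`-th order dominance relation under
`L^{r-1}` convergence. -/
theorem stmt1 {Ω : Type*} [MeasurableSpace Ω] (P : Measure Ω) [IsProbabilityMeasure P]
    (r : ℝ) (hr : 2 ≤ r) (Zn Yn : ℕ → Ω → ℝ) (Z Y : Ω → ℝ)
    (hZn : ∀ n, MemLp (Zn n) (ENNReal.ofReal (r - 1)) P)
    (hYn : ∀ n, MemLp (Yn n) (ENNReal.ofReal (r - 1)) P)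
    (hZ : MemLp Z (ENNReal.ofReal (r - 1)) P)
    (hY : MemLp Y (ENNReal.ofReal (r - 1)) P)
    (hZconv : Tendsto (fun n => eLpNorm (fun ω => Zn n ω - Z ω) (ENNReal.ofReal (r - 1)) P)
      atTop (nhds 0))
    (hYconv : Tendsto (fun n => eLpNorm (fun ω => Yn n ω - Y ω) (ENNReal.ofReal (r - 1)) P)
      atTop (nhds 0))
    (hdom : ∀ n, domR P (Zn n) (Yn n) r) :
    domR P Z Y r := by
  intro η
  have hZt := aux_tendsto P r hr Zn Z hZn hZ hZconv η
  have hYt := aux_tendsto P r hr Yn Y hYn hY hYconv η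
  have hmain := le_of_tendsto_of_tendsto' (hZt.const_mul (1 / Real.Gamma r))
    (hYt.const_mul (1 / Real.Gamma r)) (fun n => by simpa [sfr] using hdom n η)
  simpa [sfr] using hmain

end
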